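/- Let γ : ℝ³ → ℝ³ be defined by γ(x,y,z) = (-x, -z/√(1+x²/4), y·√(1+x²/4)). Let u be the 2×2 rotation matrix (1/√(1+x²/4))·[[x/2, 1],[-1, x/2]] and v = -u. Then for the Heisenberg group element n(x,y,z) = [[1, x, z+xy/2],[0,1,y],[0,0,1]], one has diag(u,1) · n(x,y,z) · diag(v,1) = n(γ(x,y,z)). -/

import Mathlib

open Matrix

/-- The Heisenberg group element `n(x,y,z)`. -/
noncomputable def heisEl (x y z : ℝ) : Matrix (Fin 3) (Fin 3) ℝ :=
  !![1, x, z + x * y / 2; 0, 1, y; 0, 0, 1]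

/-- The map `γ(x,y,z) = (-x, -z/√(1+x²/4), y·√(1+x²/4))`. -/
noncomputable def gammaMap : ℝ × ℝ × ℝ → ℝ × ℝ × ℝ :=
  fun p => (-p.1, -p.2.2 / Real.sqrt (1 + p.1 ^ 2 / 4), p.2.1 * Real.sqrt (1 + p.1 ^ 2 / 4))

/-- The rotation matrix `u`. -/
noncomputable def uRot (x : ℝ) : Matrix (Fin 2) (Fin 2) ℝ :=
  (1 / Real.sqrt (1 + x ^ 2 / 4)) • !![x / 2, 1; -1, x / 2]

/-- `diag(u, 1)`, the block diagonal 3×3 matrix with 2×2 block `u` and scalar `1`. -/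
noncomputable def diagBlock (u : Matrix (Fin 2) (Fin 2) ℝ) : Matrix (Fin 3) (Fin 3) ℝ :=
  Matrix.reindex finSumFinEquiv finSumFinEquiv
    (Matrix.fromBlocks u 0 0 (1 : Matrix (Fin 1) (Fin 1) ℝ))

lemma diagBlock_eq (u : Matrix (Fin 2) (Fin 2) ℝ) :
    diagBlock u = !![u 0 0, u 0 1, 0; u 1 0, u 1 1, 0; 0, 0, 1] := by
  ext i j
  fin_cases i <;> fin_cases j <;>
    simp [diagBlock, Matrix.fromBlocks, finSumFinEquiv] <;> rfl

theorem conj_heisenberg_eq (x y z : ℝ) :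
    diagBlock (uRot x) * heisEl x y z * diagBlock (-(uRot x)) =
      heisEl (gammaMap (x, y, z)).1 (gammaMap (x, y, z)).2.1 (gammaMap (x, y, z)).2.2 := by
  have hpos : (0:ℝ) < 1 + x ^ 2 / 4 := by positivity
  set s := Real.sqrt (1 + x ^ 2 / 4) with hsdef
  have hs : s * s = 1 + x ^ 2 / 4 := Real.mul_self_sqrt hpos.le
  have hs0 : s ≠ 0 := by
    have := Real.sqrt_pos.mpr hpos
    exact ne_of_gt this
  clear_value s
  ext i j
  fin_cases i <;> fin_cases j <;>
    simp [diagBlock_eq, uRot, heisEl, gammaMap, Matrix.mul_apply, Fin.sum_univ_three, ← hsdef]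
  all_goals try field_simp
  all_goals try simp [Matrix.vecHead, Matrix.vecTail]
  all_goals try ring1
  all_goals first
    | linear_combination (-8 * s ^ 3) * hs
    | linear_combination (8 * x * s ^ 3) * hs
    | linear_combination (-8 * y * s ^ 2) * hs
    | linear_combination (-4 * s ^ 3) * hs
    | linear_combination (-4) * hs
    | linear_combination (4 * x) * hs
    | linear_combination (-4 * y) * hs
    | (right; norm_num)
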